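/- Let W be a graph product of cyclic groups on graph Γ and suppose vertices v_i, v_j with d(v_i, v_j) ≥ 2 admit a set R that is a connected component of both Γ \ S_i and Γ \ S_j. Then for every positive integer n and every vertex v_r ∈ R, (χ_{iR} χ_{jR})^n(v_r) = (v_j v_i)^n v_r (v_j v_i)^{-n} and (χ_{iR} χ_{jR})^n(v_i) = v_i; consequently no positive power of χ_{iR} χ_{jR} is an inner automorphism of W. -/

import Mathlib

/-- Defining relations of the graph product of cyclic groups `W(Γ, m)`.
`m i = 0` encodes infinite order (and gives the trivial relation). -/
def grels {N : ℕ} (G : SimpleGraph (Fin N)) (m : Fin N → ℕ) : Set (FreeGroup (Fin N)) :=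
  {r | (∃ i, r = FreeGroup.of i ^ m i) ∨
    ∃ i j, G.Adj i j ∧
      r = FreeGroup.of i * FreeGroup.of j * (FreeGroup.of i)⁻¹ * (FreeGroup.of j)⁻¹}

def gstar {V : Type*} (G : SimpleGraph V) (v : V) : Set V := {u | u = v ∨ G.Adj v u}

def IsCompOf {V : Type*} (G : SimpleGraph V) (s K : Set V) : Prop :=
  K.Nonempty ∧ K ⊆ s ∧ (G.induce K).Connected ∧
    ∀ K' : Set V, K ⊆ K' → K' ⊆ s → (G.induce K').Connected → K' = K

/-- `φ` is the partial conjugation with operating letter `v i` and domain `K`. -/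
def IsPartialConj {N : ℕ} (G : SimpleGraph (Fin N)) (m : Fin N → ℕ) (i : Fin N)
    (K : Set (Fin N)) (φ : MulAut (PresentedGroup (grels G m))) : Prop :=
  (∀ k ∈ K, φ (PresentedGroup.of k) =
      PresentedGroup.of i * PresentedGroup.of k * (PresentedGroup.of i)⁻¹) ∧
  (∀ k ∉ K, φ (PresentedGroup.of k) = PresentedGroup.of k)


open Monoid.CoprodI

lemma aux_fst {ι : Type*} [DecidableEq ι] {M : ι → Type*} [∀ k, Group (M k)]
    [∀ k, DecidableEq (M k)] {i j : ι} (hij : i ≠ j) (α : M i) (β : M j)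
    (hα : α ≠ 1) (hβ : β ≠ 1) :
    ∀ n : ℕ, (((of α * of β) ^ (n + 1)) • (Word.empty : Word M)).fstIdx = some i := by
  have key : ∀ w : Word M, w.fstIdx ≠ some j →
      ((of α * of β) • w).fstIdx = some i := by
    intro w hw
    rw [mul_smul, ← Word.cons_eq_smul (m := β) (h1 := hw) (h2 := hβ)]
    rw [← Word.cons_eq_smul (m := α) (h1 := by simp [Ne.symm hij]) (h2 := hα)]
    simp
  intro n
  induction n with
  | zero => simpa using key Word.empty (by simp [Word.fstIdx])
  | succ n ih =>
    rw [pow_succ', mul_smul]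
    exact key _ (by rw [ih]; simp [hij])

lemma aux_ne {ι : Type*} [DecidableEq ι] {M : ι → Type*} [∀ k, Group (M k)]
    [∀ k, DecidableEq (M k)] {i j : ι} (hij : i ≠ j) (α : M i) (β : M j)
    (hα : α ≠ 1) (hβ : β ≠ 1) (n : ℕ) (hn : 0 < n) :
    (of α * of β) ^ n ≠ (of β * of α) ^ n := by
  obtain ⟨k, rfl⟩ := Nat.exists_eq_add_of_lt hn
  intro h
  have h1 := aux_fst hij α β hα hβ k
  have h2 := aux_fst (Ne.symm hij) β α hβ hα k
  rw [zero_add] at h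
  rw [h, h2] at h1
  exact hij (Option.some.inj h1).symm

open Monoid Monoid.CoprodI

abbrev Hgrp (p q : ℕ) : Type := Monoid.CoprodI (fun b : Bool => Multiplicative (ZMod (cond b q p)))

abbrev Ngrp (p q s : ℕ) : Type := Multiplicative (Hgrp p q →₀ ZMod s)

def genH (p q : ℕ) (b : Bool) : Hgrp p q := of (Multiplicative.ofAdd (1 : ZMod (cond b q p)))

noncomputable def actφ (p q s : ℕ) : Hgrp p q →* MulAut (Ngrp p q s) where
  toFun g := AddEquiv.toMultiplicative (Finsupp.domCongr (Equiv.mulLeft g))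
  map_one' := by
    ext f : 1
    refine Multiplicative.toAdd.injective (Finsupp.ext fun x => ?_)
    simp [Finsupp.equivMapDomain_apply, Equiv.Perm.one_symm, Equiv.Perm.one_apply]
  map_mul' g h := by
    ext f : 1
    refine Multiplicative.toAdd.injective (Finsupp.ext fun x => ?_)
    simp [Finsupp.equivMapDomain_apply, Equiv.Perm.mul_def, Equiv.symm_trans_apply, mul_assoc]

lemma actφ_single (p q s : ℕ) (g x : Hgrp p q) (v : ZMod s) :
    actφ p q s g (Multiplicative.ofAdd (Finsupp.single x v)) =
      Multiplicative.ofAdd (Finsupp.single (g * x) v) := by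
  simp [actφ, Finsupp.domCongr_apply]

lemma zmod_one_ne_zero {m : ℕ} (hm : m ≠ 1) : (1 : ZMod m) ≠ 0 := by
  match m, hm with
  | 0, _ => exact one_ne_zero
  | (k+2), _ =>
    haveI : Fact (1 < k + 2) := ⟨by omega⟩
    exact one_ne_zero

lemma genH_ne_one {p q : ℕ} {b : Bool} (h : cond b q p ≠ 1) :
    (Multiplicative.ofAdd (1 : ZMod (cond b q p))) ≠ 1 := by
  simpa using zmod_one_ne_zero h

lemma ofAdd_one_pow (k : ℕ) : (Multiplicative.ofAdd (1 : ZMod k)) ^ k = 1 := by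
  rw [← ofAdd_nsmul]
  simp [nsmul_eq_mul, ZMod.natCast_self]

open SemidirectProduct in
lemma conj_inl (p q s : ℕ) (x : Ngrp p q s ⋊[actφ p q s] Hgrp p q) (c : Ngrp p q s) :
    x * inl c * x⁻¹ = inl (actφ p q s x.right c) := by
  ext <;>
    simp [mul_comm, mul_assoc, mul_left_comm]

open SemidirectProduct in
lemma no_sol (p q s : ℕ) (hp : p ≠ 1) (hq : q ≠ 1) (hs : s ≠ 1) (n : ℕ) (hn : 0 < n) :
    ¬ ∃ x : Ngrp p q s ⋊[actφ p q s] Hgrp p q,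
      x * inl (Multiplicative.ofAdd (Finsupp.single 1 (1 : ZMod s))) * x⁻¹ =
        (inr (genH p q true) * inr (genH p q false)) ^ n *
          inl (Multiplicative.ofAdd (Finsupp.single 1 (1 : ZMod s))) *
          ((inr (genH p q true) * inr (genH p q false)) ^ n)⁻¹ ∧
      x * inr (genH p q false) * x⁻¹ = inr (genH p q false) := by
  rintro ⟨x, h2, h1⟩
  set a := genH p q false with ha
  set b := genH p q true with hb
  set c : Ngrp p q s := Multiplicative.ofAdd (Finsupp.single 1 (1 : ZMod s)) with hc
  have hw : (inr b * inr a : Ngrp p q s ⋊[actφ p q s] Hgrp p q) ^ n = inr ((b * a) ^ n) := by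
    rw [← map_mul, ← map_pow]
  rw [hw, conj_inl, conj_inl] at h2
  have hxr : x.right = (b * a) ^ n := by
    have h2' := inl_injective h2
    rw [right_inr, hc, actφ_single, actφ_single] at h2'
    have h3 := congrArg Multiplicative.toAdd h2'
    simp only [toAdd_ofAdd] at h3
    have h4 := Finsupp.single_left_injective (α := Hgrp p q) (zmod_one_ne_zero hs) h3
    simpa using h4
  -- push h1 through rightHom
  have h4 : x.right * a * x.right⁻¹ = a := by
    have := congrArg (rightHom (φ := actφ p q s)) h1
    simpa using this
  rw [hxr] at h4
  have h5 : (b * a) ^ n * a = (a * b) ^ n * a := by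
    have hsc : SemiconjBy a (b * a) (a * b) := by
      unfold SemiconjBy; group
    have h6 := (hsc.pow_right n).eq
    rw [mul_inv_eq_iff_eq_mul] at h4
    rw [h4, h6]
  have h7 : (b * a) ^ n = (a * b) ^ n := mul_right_cancel h5
  have hane : (Multiplicative.ofAdd (1 : ZMod (cond false q p))) ≠ 1 := genH_ne_one (b := false) hp
  have hbne : (Multiplicative.ofAdd (1 : ZMod (cond true q p))) ≠ 1 := genH_ne_one (b := true) hq
  exact aux_ne (by simp : (true : Bool) ≠ false) _ _ hbne hane n hn h7

lemma inl_c_pow (p q s : ℕ) :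
    (SemidirectProduct.inl (φ := actφ p q s)
      (Multiplicative.ofAdd (Finsupp.single 1 (1 : ZMod s)))) ^ s = 1 := by
  rw [← map_pow, ← ofAdd_nsmul, Finsupp.smul_single, nsmul_eq_mul, mul_one, ZMod.natCast_self,
    Finsupp.single_zero]
  simp

lemma genH_pow (p q : ℕ) (b : Bool) : genH p q b ^ (cond b q p) = 1 := by
  rw [genH, ← map_pow, ofAdd_one_pow, map_one]

noncomputable def fmap {N : ℕ} (i j r : Fin N) (p q s : ℕ) (k : Fin N) :
    Ngrp p q s ⋊[actφ p q s] Hgrp p q :=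
  if k = i then .inr (genH p q false) else if k = j then .inr (genH p q true)
  else if k = r then .inl (Multiplicative.ofAdd (Finsupp.single 1 (1 : ZMod s))) else 1

theorem stmt15 {N : ℕ} (G : SimpleGraph (Fin N)) (m : Fin N → ℕ)
    (hm : ∀ i, m i = 0 ∨ IsPrimePow (m i))
    (i j : Fin N) (hne : i ≠ j) (hnadj : ¬ G.Adj i j)
    (R : Set (Fin N))
    (hRi : IsCompOf G ((gstar G i)ᶜ) R) (hRj : IsCompOf G ((gstar G j)ᶜ) R)
    (φ ψ : MulAut (PresentedGroup (grels G m)))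
    (hφ : IsPartialConj G m i R φ) (hψ : IsPartialConj G m j R ψ) :
    ∀ n : ℕ, 0 < n →
      (∀ r ∈ R, ((φ * ψ) ^ n) (PresentedGroup.of r) =
          (PresentedGroup.of j * PresentedGroup.of i) ^ n * PresentedGroup.of r *
            ((PresentedGroup.of j * PresentedGroup.of i) ^ n)⁻¹) ∧
      ((φ * ψ) ^ n) (PresentedGroup.of i) = PresentedGroup.of i ∧
      ∀ g : PresentedGroup (grels G m), (φ * ψ) ^ n ≠ MulAut.conj g := by
  have hiR : i ∉ R := fun h => hRi.2.1 h (Or.inl rfl)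
  have hjR : j ∉ R := fun h => hRj.2.1 h (Or.inl rfl)
  have fixφi : φ (PresentedGroup.of i) = PresentedGroup.of i := hφ.2 i hiR
  have fixφj : φ (PresentedGroup.of j) = PresentedGroup.of j := hφ.2 j hjR
  have fixψi : ψ (PresentedGroup.of i) = PresentedGroup.of i := hψ.2 i hiR
  have fixψj : ψ (PresentedGroup.of j) = PresentedGroup.of j := hψ.2 j hjR
  have fixn_i : ∀ k : ℕ, ((φ * ψ) ^ k) (PresentedGroup.of i) = PresentedGroup.of i := by
    intro k
    induction k with
    | zero => simp
    | succ k ih =>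
      rw [pow_succ, MulAut.mul_apply, MulAut.mul_apply, fixψi, fixφi]
      exact ih
  have fixn_j : ∀ k : ℕ, ((φ * ψ) ^ k) (PresentedGroup.of j) = PresentedGroup.of j := by
    intro k
    induction k with
    | zero => simp
    | succ k ih =>
      rw [pow_succ, MulAut.mul_apply, MulAut.mul_apply, fixψj, fixφj]
      exact ih
  have part1 : ∀ k : ℕ, ∀ r ∈ R, ((φ * ψ) ^ k) (PresentedGroup.of r) =
      (PresentedGroup.of j * PresentedGroup.of i) ^ k * PresentedGroup.of r *
        ((PresentedGroup.of j * PresentedGroup.of i) ^ k)⁻¹ := by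
    intro k
    induction k with
    | zero => simp
    | succ k ih =>
      intro r hr
      have step : (φ * ψ) (PresentedGroup.of r) =
          (PresentedGroup.of j * PresentedGroup.of i) * PresentedGroup.of r *
            (PresentedGroup.of j * PresentedGroup.of i)⁻¹ := by
        rw [MulAut.mul_apply, hψ.1 r hr, map_mul, map_mul, map_inv, fixφj, hφ.1 r hr]
        group
      have fix1j : (φ * ψ) (PresentedGroup.of j) = PresentedGroup.of j := by
        rw [MulAut.mul_apply, fixψj, fixφj]
      have fix1i : (φ * ψ) (PresentedGroup.of i) = PresentedGroup.of i := by
        rw [MulAut.mul_apply, fixψi, fixφi]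
      rw [pow_succ', MulAut.mul_apply, ih r hr, map_mul, map_mul, map_inv, map_pow,
        map_mul, fix1j, fix1i, step]
      simp only [pow_succ, mul_inv_rev, mul_assoc]
  intro n hn
  refine ⟨part1 n, fixn_i n, ?_⟩
  intro g hg
  obtain ⟨r, hrR⟩ := hRi.1
  have hri : r ∉ gstar G i := hRi.2.1 hrR
  have hrj : r ∉ gstar G j := hRj.2.1 hrR
  simp only [gstar, Set.mem_setOf_eq, not_or] at hri hrj
  obtain ⟨hri1, hri2⟩ := hri
  obtain ⟨hrj1, hrj2⟩ := hrj
  have hmne : ∀ k : Fin N, m k ≠ 1 := fun k =>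
    (hm k).elim (fun h => by omega) fun h => h.ne_one
  have hf : ∀ rel ∈ grels G m, FreeGroup.lift (fmap i j r (m i) (m j) (m r)) rel = 1 := by
    intro rel hrel
    rcases hrel with ⟨k, rfl⟩ | ⟨u, v, huv, rfl⟩
    · rw [map_pow, FreeGroup.lift_apply_of]
      by_cases hki : k = i
      · subst hki
        rw [fmap, if_pos rfl, ← map_pow,
          show genH (m k) (m j) false ^ m k = 1 from genH_pow (m k) (m j) false, map_one]
      by_cases hkj : k = j
      · subst hkj
        rw [fmap, if_neg hki, if_pos rfl, ← map_pow,
          show genH (m i) (m k) true ^ m k = 1 from genH_pow (m i) (m k) true, map_one]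
      by_cases hkr : k = r
      · subst hkr
        rw [fmap, if_neg hki, if_neg hkj, if_pos rfl]
        exact inl_c_pow (m i) (m j) (m k)
      · rw [fmap, if_neg hki, if_neg hkj, if_neg hkr, one_pow]
    · have fv1 : ∀ w, w ≠ i → w ≠ j → w ≠ r → fmap i j r (m i) (m j) (m r) w = 1 := by
        intro w h1 h2 h3; rw [fmap, if_neg h1, if_neg h2, if_neg h3]
      have hone : fmap i j r (m i) (m j) (m r) u = 1 ∨ fmap i j r (m i) (m j) (m r) v = 1 := by
        by_cases hui : u = i
        · subst hui
          exact Or.inr (fv1 v (fun h => by subst h; exact G.irrefl huv)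
            (fun h => by subst h; exact hnadj huv)
            (fun h => by subst h; exact hri2 huv))
        by_cases huj : u = j
        · subst huj
          exact Or.inr (fv1 v (fun h => by subst h; exact hnadj (G.adj_symm huv))
            (fun h => by subst h; exact G.irrefl huv)
            (fun h => by subst h; exact hrj2 huv))
        by_cases hur : u = r
        · subst hur
          exact Or.inr (fv1 v (fun h => by subst h; exact hri2 (G.adj_symm huv))
            (fun h => by subst h; exact hrj2 (G.adj_symm huv))
            (fun h => by subst h; exact G.irrefl huv))
        · exact Or.inl (fv1 u hui huj hur)
      rcases hone with h | h <;>
        simp [map_mul, map_inv, FreeGroup.lift_apply_of, h]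
  set π := PresentedGroup.toGroup hf with hπ
  have hgr : g * PresentedGroup.of r * g⁻¹ =
      (PresentedGroup.of j * PresentedGroup.of i) ^ n * PresentedGroup.of r *
        ((PresentedGroup.of j * PresentedGroup.of i) ^ n)⁻¹ := by
    have := part1 n r hrR
    rw [hg, MulAut.conj_apply] at this
    exact this
  have hgi : g * PresentedGroup.of i * g⁻¹ = PresentedGroup.of i := by
    have := fixn_i n
    rw [hg, MulAut.conj_apply] at this
    exact this
  have fi : fmap i j r (m i) (m j) (m r) i = SemidirectProduct.inr (genH (m i) (m j) false) := by
    rw [fmap, if_pos rfl]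
  have fj : fmap i j r (m i) (m j) (m r) j = SemidirectProduct.inr (genH (m i) (m j) true) := by
    rw [fmap, if_neg (Ne.symm hne), if_pos rfl]
  have fr : fmap i j r (m i) (m j) (m r) r =
      SemidirectProduct.inl (Multiplicative.ofAdd (Finsupp.single 1 (1 : ZMod (m r)))) := by
    rw [fmap, if_neg hri1, if_neg hrj1, if_pos rfl]
  have e1 := congrArg π hgr
  have e2 := congrArg π hgi
  simp only [map_mul, map_inv, map_pow, PresentedGroup.toGroup.of, hπ, fi, fj, fr] at e1 e2
  exact no_sol (m i) (m j) (m r) (hmne i) (hmne j) (hmne r) n hn ⟨π g, e1, e2⟩
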